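/- Let ϱ, d > 0, let Ω, α, β be real numbers, and define D : ℝ → ℝ by D(k) = ϱ·k·coth(k) + k·coth(d·k) + Ω − α − β·k² for k ≠ 0, with D(0) := ϱ + 1/d + Ω − α. Then: (i) D(0) = 0 if and only if α = α₀ := ϱ + 1/d + Ω; and (ii) if α = α₀, then the limit as k → 0 of D(k)/k² equals (ϱ + d)/3 − β; in particular k = 0 is a root of D of order at least 4 exactly when additionally β = β₀ := (ϱ + d)/3. -/

import Mathlib

open Real Filter Topology

/-- Hyperbolic cotangent. -/
noncomputable def coth (x : ℝ) : ℝ := Real.cosh x / Real.sinh x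

lemma sinh_div_self : Tendsto (fun x : ℝ => Real.sinh x / x) (𝓝[≠] 0) (𝓝 1) := by
  have h := (Real.hasDerivAt_sinh 0)
  rw [hasDerivAt_iff_tendsto_slope] at h
  rw [Real.cosh_zero] at h
  exact h.congr fun x => by simp [slope_def_field]

lemma self_div_sinh : Tendsto (fun x : ℝ => x / Real.sinh x) (𝓝[≠] 0) (𝓝 1) := by
  have := sinh_div_self.inv₀ (by norm_num)
  simpa using this

lemma lemA1 : Tendsto (fun x : ℝ => (x * Real.cosh x - Real.sinh x) / x ^ 3)
    (𝓝[≠] 0) (𝓝 (1/3)) := by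
  apply HasDerivAt.lhopital_zero_nhdsNE (f' := fun x => x * Real.sinh x)
      (g' := fun x => 3 * x ^ 2)
  · filter_upwards with x
    have : HasDerivAt (fun x : ℝ => x * Real.cosh x - Real.sinh x)
        (1 * Real.cosh x + x * Real.sinh x - Real.cosh x) x :=
      ((hasDerivAt_id x).mul (Real.hasDerivAt_cosh x)).sub (Real.hasDerivAt_sinh x)
    convert this using 1; ring
  · filter_upwards with x
    simpa using hasDerivAt_pow 3 x
  · filter_upwards [self_mem_nhdsWithin] with x hx
    have : x ≠ 0 := hx
    positivity
  · have : Tendsto (fun x : ℝ => x * Real.cosh x - Real.sinh x) (𝓝 0) (𝓝 0) := by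
      have : Continuous (fun x : ℝ => x * Real.cosh x - Real.sinh x) :=
        (continuous_id.mul Real.continuous_cosh).sub Real.continuous_sinh
      have h2 := this.tendsto 0
      simpa using h2
    exact this.mono_left nhdsWithin_le_nhds
  · have : Tendsto (fun x : ℝ => x ^ 3) (𝓝 0) (𝓝 0) := by
      simpa using (continuous_pow 3).tendsto (0:ℝ)
    exact this.mono_left nhdsWithin_le_nhds
  · have heq : ∀ᶠ x in 𝓝[≠] (0:ℝ), Real.sinh x / x / 3 = x * Real.sinh x / (3 * x ^ 2) := by
      filter_upwards [self_mem_nhdsWithin] with x hx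
      have : x ≠ 0 := hx
      field_simp
    exact Tendsto.congr' heq (by simpa using sinh_div_self.div_const 3)

lemma lemA : Tendsto (fun x : ℝ => (x * coth x - 1) / x ^ 2) (𝓝[≠] 0) (𝓝 (1/3)) := by
  have h := lemA1.mul self_div_sinh
  rw [show (1/3 : ℝ) = 1/3 * 1 by ring]
  refine Tendsto.congr' ?_ h
  filter_upwards [self_mem_nhdsWithin] with x hx
  have hx' : (x:ℝ) ≠ 0 := hx
  have hs : Real.sinh x ≠ 0 := fun h => hx' (Real.sinh_eq_zero.mp h)
  simp only [coth]
  field_simp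

/-- The dispersion relation of the linearized two-layer problem with constant
    vorticity: `D 0 = 0 ↔ α = α₀ := ϱ + 1/d + Ω`, and if `α = α₀` then
    `D k / k² → (ϱ+d)/3 − β` as `k → 0`. -/
theorem stmt3 (ϱ d Ω α β : ℝ) (hϱ : 0 < ϱ) (hd : 0 < d)
    (D : ℝ → ℝ)
    (hD : ∀ k : ℝ, k ≠ 0 →
      D k = ϱ * k * coth k + k * coth (d * k) + Ω - α - β * k ^ 2)
    (hD0 : D 0 = ϱ + 1 / d + Ω - α) :
    (D 0 = 0 ↔ α = ϱ + 1 / d + Ω) ∧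
      (α = ϱ + 1 / d + Ω →
        Tendsto (fun k : ℝ => D k / k ^ 2) (𝓝[≠] (0 : ℝ))
          (𝓝 ((ϱ + d) / 3 - β))) := by
  constructor
  · rw [hD0]; constructor <;> intro h <;> linarith
  · intro hα
    have hmap : Tendsto (fun k : ℝ => d * k) (𝓝[≠] 0) (𝓝[≠] (0:ℝ)) := by
      apply tendsto_nhdsWithin_of_tendsto_nhds_of_eventually_within
      · have : Tendsto (fun k : ℝ => d * k) (𝓝 0) (𝓝 (d * 0)) :=
          (continuous_const.mul continuous_id).tendsto 0
        exact (by simpa using this : Tendsto (fun k : ℝ => d * k) (𝓝 0) (𝓝 (0:ℝ))).mono_left nhdsWithin_le_nhds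
      · filter_upwards [self_mem_nhdsWithin] with x hx
        exact mul_ne_zero hd.ne' hx
    have h2 : Tendsto (fun k : ℝ => (d * k * coth (d * k) - 1) / (d * k) ^ 2)
        (𝓝[≠] 0) (𝓝 (1/3)) := lemA.comp hmap
    have h := ((lemA.const_mul ϱ).add (h2.const_mul d)).sub_const β
    have hval : ϱ * (1/3) + d * (1/3) - β = (ϱ + d) / 3 - β := by ring
    rw [hval] at h
    refine Tendsto.congr' ?_ h
    filter_upwards [self_mem_nhdsWithin] with k hk
    have hk' : (k : ℝ) ≠ 0 := hk
    rw [hD k hk', hα]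
    set c1 := coth k
    set c2 := coth (d * k)
    field_simp
    ring
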